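/- arXiv:2510.06886 — 3 statements merged into one kernel-verified Lean document; each statement's English description precedes it below -/
import Mathlib

section
/- Let A, B be hoops and p : A → B, s : B → A hoop homomorphisms with p ∘ s = id_B, and let X = {a ∈ A | p(a) = 1} be the kernel of p. Define φ : X² × B → A by φ(x, x', b) = (x → s(b)) · x' and ψ : A → X² × B by ψ(a) = (a → s(p(a)), ((a → s(p(a))) → s(p(a))) → a, p(a)). Then: (i) for every a ∈ A, both components a → s(p(a)) and ((a → s(p(a))) → s(p(a))) → a lie in X; (ii) φ(ψ(a)) = a for all a ∈ A; (iii) ψ(a) lies in the set Y = {(x, x', b) ∈ X² × B | ((x → s(b)) · x') → s(b) = x and ((((x → s(b)) · x') → s(b)) → s(b)) → ((x → s(b)) · x') = x'} for every a ∈ A; and (iv) ψ(φ(x, x', b)) = (x, x', b) for every (x, x', b) ∈ Y, so that ψ and φ restrict to mutually inverse bijections between A and Y. -/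
class Hoop (α : Type*) extends CommMonoid α, HImp α where
  himp_self : ∀ x : α, x ⇨ x = 1
  mul_himp_comm : ∀ x y : α, x * (x ⇨ y) = y * (y ⇨ x)
  mul_himp_assoc : ∀ x y z : α, (x * y) ⇨ z = x ⇨ (y ⇨ z)

namespace Hoop

variable {α : Type*} [Hoop α]

theorem one_himp (x : α) : (1 : α) ⇨ x = x := by
  have h1 : (1 : α) ⇨ (x ⇨ 1) = x ⇨ 1 := by
    rw [← Hoop.mul_himp_assoc, one_mul]
  have h3 : x * (x ⇨ 1) = 1 ⇨ x := by
    rw [Hoop.mul_himp_comm, one_mul]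
  have h2 : (x ⇨ 1) * ((x ⇨ 1) ⇨ 1) = x ⇨ 1 := by
    rw [Hoop.mul_himp_comm, one_mul, h1]
  have h4 : x ⇨ ((1 : α) ⇨ x) = 1 := by
    rw [← Hoop.mul_himp_assoc, mul_one, Hoop.himp_self]
  have h6 : ((1 : α) ⇨ x) ⇨ x = (x ⇨ 1) ⇨ 1 := by
    rw [← h3, mul_comm, Hoop.mul_himp_assoc, Hoop.himp_self]
  have h5 : ((1 : α) ⇨ x) * (((1 : α) ⇨ x) ⇨ x) = x := by
    rw [Hoop.mul_himp_comm, h4, mul_one]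
  rw [h6] at h5
  calc (1 : α) ⇨ x = x * (x ⇨ 1) := h3.symm
    _ = x * ((x ⇨ 1) * ((x ⇨ 1) ⇨ 1)) := by rw [h2]
    _ = (x * (x ⇨ 1)) * ((x ⇨ 1) ⇨ 1) := by rw [mul_assoc]
    _ = ((1 : α) ⇨ x) * ((x ⇨ 1) ⇨ 1) := by rw [h3]
    _ = x := h5

theorem himp_one (x : α) : x ⇨ (1 : α) = 1 := by
  have hx : x * (x ⇨ 1) = x := by rw [Hoop.mul_himp_comm, one_mul, one_himp]
  calc x ⇨ (1 : α) = (x * (x ⇨ 1)) ⇨ 1 := by rw [hx]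
    _ = ((x ⇨ 1) * x) ⇨ 1 := by rw [mul_comm]
    _ = (x ⇨ 1) ⇨ (x ⇨ 1) := Hoop.mul_himp_assoc ..
    _ = 1 := Hoop.himp_self _

theorem himp_himp_himp (a c : α) : a ⇨ ((a ⇨ c) ⇨ c) = 1 := by
  rw [← Hoop.mul_himp_assoc, Hoop.mul_himp_comm, mul_comm, Hoop.mul_himp_assoc,
    Hoop.himp_self, himp_one]

theorem himp_himp_mul (a c : α) : ((a ⇨ c) ⇨ c) * (((a ⇨ c) ⇨ c) ⇨ a) = a := by
  rw [Hoop.mul_himp_comm, himp_himp_himp, mul_one]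

end Hoop

/-- Given a split epimorphism of hoops `p : A → B` with section `s` and kernel
`X = {a | p a = 1}`, the maps `φ(x,x',b) = (x → s b) · x'` and
`ψ(a) = (a → s(p a), ((a → s(p a)) → s(p a)) → a, p a)` satisfy:
(i) both components of `ψ(a)` lie in `X`;
(ii) `φ(ψ(a)) = a`;
(iii) `ψ(a)` lies in the set `Y`;
(iv) `ψ(φ(x,x',b)) = (x,x',b)` for `(x,x',b) ∈ X² × B` lying in `Y`. -/
theorem stmt1 {A B : Type*} [Hoop A] [Hoop B] (p : A → B) (s : B → A)
    (hp1 : p 1 = 1) (hpm : ∀ a a' : A, p (a * a') = p a * p a')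
    (hpi : ∀ a a' : A, p (a ⇨ a') = p a ⇨ p a')
    (hs1 : s 1 = 1) (hsm : ∀ b b' : B, s (b * b') = s b * s b')
    (hsi : ∀ b b' : B, s (b ⇨ b') = s b ⇨ s b')
    (hps : ∀ b : B, p (s b) = b) :
    -- (i) the two components of ψ(a) lie in the kernel X
    (∀ a : A, p (a ⇨ s (p a)) = 1 ∧ p (((a ⇨ s (p a)) ⇨ s (p a)) ⇨ a) = 1) ∧
    -- (ii) φ(ψ(a)) = a
    (∀ a : A,
      ((a ⇨ s (p a)) ⇨ s (p a)) * (((a ⇨ s (p a)) ⇨ s (p a)) ⇨ a) = a) ∧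
    -- (iii) ψ(a) ∈ Y
    (∀ a : A,
      ((((a ⇨ s (p a)) ⇨ s (p a)) * (((a ⇨ s (p a)) ⇨ s (p a)) ⇨ a)) ⇨ s (p a)
        = a ⇨ s (p a)) ∧
      (((((a ⇨ s (p a)) ⇨ s (p a)) * (((a ⇨ s (p a)) ⇨ s (p a)) ⇨ a)) ⇨ s (p a)) ⇨ s (p a)) ⇨
          (((a ⇨ s (p a)) ⇨ s (p a)) * (((a ⇨ s (p a)) ⇨ s (p a)) ⇨ a))
        = ((a ⇨ s (p a)) ⇨ s (p a)) ⇨ a) ∧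
    -- (iv) ψ(φ(x,x',b)) = (x,x',b) for (x,x',b) ∈ Y
    (∀ (x x' : A) (b : B), p x = 1 → p x' = 1 →
      ((x ⇨ s b) * x') ⇨ s b = x →
      ((((x ⇨ s b) * x') ⇨ s b) ⇨ s b) ⇨ ((x ⇨ s b) * x') = x' →
      (((x ⇨ s b) * x') ⇨ s (p ((x ⇨ s b) * x')) = x ∧
        ((((x ⇨ s b) * x') ⇨ s (p ((x ⇨ s b) * x'))) ⇨ s (p ((x ⇨ s b) * x'))) ⇨
            ((x ⇨ s b) * x') = x' ∧
        p ((x ⇨ s b) * x') = b)) := by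
  have key : ∀ a : A,
      ((a ⇨ s (p a)) ⇨ s (p a)) * (((a ⇨ s (p a)) ⇨ s (p a)) ⇨ a) = a :=
    fun a => Hoop.himp_himp_mul a (s (p a))
  refine ⟨fun a => ⟨?_, ?_⟩, key, fun a => ⟨by rw [key], by rw [key]⟩, ?_⟩
  · rw [hpi, hps, Hoop.himp_self]
  · rw [hpi, hpi, hpi, hps, Hoop.himp_self, Hoop.one_himp, Hoop.himp_self]
  · intro x x' b hx hx' h1 h2
    have hb : p ((x ⇨ s b) * x') = b := by
      rw [hpm, hpi, hps, hx, hx', Hoop.one_himp, mul_one]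
    rw [hb]
    exact ⟨h1, h2, rfl⟩
end

section
/- Let A, B be hoops and p : A → B, s : B → A hoop homomorphisms with p ∘ s = id_B and with s a strong section, and let X = {a ∈ A | p(a) = 1}. Then the set Y' = {(x, b) ∈ X × B | s(b) → (s(b) · x) = x}, equipped with the operations (x, b) → (y, b') = (s(b' → b) → (x → y), b → b'), (x, b) · (y, b') = (s(b · b') → (s(b · b') · x · y), b · b') and unit (1, 1), is a hoop, and the map A → Y', a ↦ (s(p(a)) → a, p(a)), is an isomorphism of hoops with inverse (x, b) ↦ s(b) · x. -/
section HoopLemmas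
variable {α : Type*} [Hoop α]

lemma himp_one_himp (x y : α) : (1:α) ⇨ (x ⇨ y) = x ⇨ y := by
  rw [← Hoop.mul_himp_assoc, one_mul]

lemma mul_himp_one' (x : α) : x * (x ⇨ 1) = 1 ⇨ x := by
  rw [Hoop.mul_himp_comm, one_mul]

lemma aux6 (x : α) : (x ⇨ 1) * ((x ⇨ 1) ⇨ 1) = x ⇨ 1 := by
  rw [mul_himp_one', himp_one_himp]

lemma aux4 (x : α) : ((1:α) ⇨ x) ⇨ x = (x ⇨ 1) ⇨ 1 := by
  conv_lhs => rw [← mul_himp_one' x]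
  rw [mul_comm, Hoop.mul_himp_assoc, Hoop.himp_self]

lemma aux5 (x : α) : x ⇨ ((1:α) ⇨ x) = 1 := by
  rw [← Hoop.mul_himp_assoc, mul_one, Hoop.himp_self]

lemma one_himp (x : α) : (1:α) ⇨ x = x := by
  calc (1:α) ⇨ x = x * (x ⇨ 1) := (mul_himp_one' x).symm
  _ = x * ((x ⇨ 1) * ((x ⇨ 1) ⇨ 1)) := by rw [aux6]
  _ = (x * (x ⇨ 1)) * ((x ⇨ 1) ⇨ 1) := by rw [mul_assoc]
  _ = ((1:α) ⇨ x) * (((1:α) ⇨ x) ⇨ x) := by rw [mul_himp_one', aux4]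
  _ = x * (x ⇨ ((1:α) ⇨ x)) := (Hoop.mul_himp_comm _ _).symm
  _ = x := by rw [aux5, mul_one]

lemma mul_self_himp (x : α) : x * (x ⇨ 1) = x := by rw [mul_himp_one', one_himp]

lemma himp_himp_self_right (x y : α) : x ⇨ (y ⇨ x) = y ⇨ 1 := by
  rw [← Hoop.mul_himp_assoc, mul_comm, Hoop.mul_himp_assoc, Hoop.himp_self]

lemma himp_himp_one (x : α) : x ⇨ (x ⇨ 1) = x ⇨ 1 := by
  have h1 : (x ⇨ 1) ⇨ (x ⇨ (x ⇨ 1)) = x ⇨ (x ⇨ 1) := by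
    rw [← Hoop.mul_himp_assoc, mul_comm, mul_self_himp]
  have h2 : (x ⇨ 1) ⇨ (x ⇨ (x ⇨ 1)) = x ⇨ 1 := himp_himp_self_right (x ⇨ 1) x
  exact h1.symm.trans h2

lemma himp_one (x : α) : x ⇨ 1 = 1 := by
  have h := himp_himp_self_right (x ⇨ 1) x
  rw [himp_himp_one, Hoop.himp_self] at h
  exact h.symm

lemma himp_antisymm {x y : α} (h1 : x ⇨ y = 1) (h2 : y ⇨ x = 1) : x = y := by
  have h := Hoop.mul_himp_comm x y
  rwa [h1, h2, mul_one, mul_one] at h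

lemma himp_mul_himp (c w : α) : c ⇨ (c * (c ⇨ w)) = c ⇨ w := by
  apply himp_antisymm
  · rw [← Hoop.mul_himp_assoc, mul_comm (c ⇨ (c * (c ⇨ w))) c,
      Hoop.mul_himp_comm c (c * (c ⇨ w)), Hoop.mul_himp_comm c w,
      mul_assoc, mul_comm w _, Hoop.mul_himp_assoc, Hoop.himp_self, himp_one]
  · rw [← Hoop.mul_himp_assoc, mul_comm (c ⇨ w) c, Hoop.himp_self]

end HoopLemmas

/-- The multiplication `(x,b) · (y,b') := (s(b·b') → (s(b·b') · x · y), b·b')`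
of the semidirect product associated with a split extension with strong section. -/
def Ymul {A B : Type*} [Hoop A] [Hoop B] (s : B → A) (q r : A × B) : A × B :=
  (s (q.2 * r.2) ⇨ (s (q.2 * r.2) * q.1 * r.1), q.2 * r.2)

/-- The implication `(x,b) → (y,b') := (s(b' → b) → (x → y), b → b')`
of the semidirect product associated with a split extension with strong section. -/
def Yimp {A B : Type*} [Hoop A] [Hoop B] (s : B → A) (q r : A × B) : A × B :=
  (s (r.2 ⇨ q.2) ⇨ (q.1 ⇨ r.1), q.2 ⇨ r.2)

/-- Membership in `Y' = {(x,b) ∈ X × B | s b → (s b · x) = x}` where `X = ker p`. -/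
def memY' {A B : Type*} [Hoop A] [Hoop B] (p : A → B) (s : B → A) (q : A × B) : Prop :=
  p q.1 = 1 ∧ s q.2 ⇨ (s q.2 * q.1) = q.1

/-- For a split epimorphism of hoops `p : A → B` with strong section `s` and kernel
`X`, the set `Y' = {(x,b) ∈ X × B | s b → (s b · x) = x}` with the operations
`(x,b) → (y,b') = (s(b' → b) → (x → y), b → b')`,
`(x,b) · (y,b') = (s(b·b') → (s(b·b')·x·y), b·b')` and unit `(1,1)` is a hoop, and
`a ↦ (s(p a) → a, p a)` is an isomorphism of hoops `A ≅ Y'` with inverse `(x,b) ↦ s b · x`. -/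
theorem stmt3 {A B : Type*} [Hoop A] [Hoop B] (p : A → B) (s : B → A)
    (hp1 : p 1 = 1) (hpm : ∀ a a' : A, p (a * a') = p a * p a')
    (hpi : ∀ a a' : A, p (a ⇨ a') = p a ⇨ p a')
    (hs1 : s 1 = 1) (hsm : ∀ b b' : B, s (b * b') = s b * s b')
    (hsi : ∀ b b' : B, s (b ⇨ b') = s b ⇨ s b')
    (hps : ∀ b : B, p (s b) = b)
    (hss : ∀ (a : A) (b : B), a ⇨ s b = s (p a) ⇨ s b) :
    -- Y' contains the unit and is closed under the operations
    memY' p s ((1 : A), (1 : B)) ∧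
    (∀ q r : A × B, memY' p s q → memY' p s r →
      memY' p s (Ymul s q r) ∧ memY' p s (Yimp s q r)) ∧
    -- (Y', ·, 1) is a commutative monoid
    (∀ q r : A × B, memY' p s q → memY' p s r → Ymul s q r = Ymul s r q) ∧
    (∀ q r t : A × B, memY' p s q → memY' p s r → memY' p s t →
      Ymul s (Ymul s q r) t = Ymul s q (Ymul s r t)) ∧
    (∀ q : A × B, memY' p s q →
      Ymul s ((1 : A), (1 : B)) q = q ∧ Ymul s q ((1 : A), (1 : B)) = q) ∧
    -- the hoop axioms hold on Y'
    (∀ q : A × B, memY' p s q → Yimp s q q = ((1 : A), (1 : B))) ∧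
    (∀ q r : A × B, memY' p s q → memY' p s r →
      Ymul s q (Yimp s q r) = Ymul s r (Yimp s r q)) ∧
    (∀ q r t : A × B, memY' p s q → memY' p s r → memY' p s t →
      Yimp s (Ymul s q r) t = Yimp s q (Yimp s r t)) ∧
    -- a ↦ (s(p a) → a, p a) is a hoop homomorphism landing in Y'
    (∀ a : A, memY' p s (s (p a) ⇨ a, p a)) ∧
    ((s (p (1 : A)) ⇨ (1 : A), p (1 : A)) = ((1 : A), (1 : B))) ∧
    (∀ a a' : A,
      (s (p (a * a')) ⇨ (a * a'), p (a * a')) = Ymul s (s (p a) ⇨ a, p a) (s (p a') ⇨ a', p a') ∧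
      (s (p (a ⇨ a')) ⇨ (a ⇨ a'), p (a ⇨ a')) = Yimp s (s (p a) ⇨ a, p a) (s (p a') ⇨ a', p a')) ∧
    -- it is a bijection onto Y' with inverse (x,b) ↦ s b · x
    (∀ a : A, s (p a) * (s (p a) ⇨ a) = a) ∧
    (∀ q : A × B, memY' p s q → (s (p (s q.2 * q.1)) ⇨ (s q.2 * q.1), p (s q.2 * q.1)) = q) := by
  -- the retraction property of a ↦ s(p a) ⇨ a  (conjunct 12)
  have h12 : ∀ a : A, s (p a) * (s (p a) ⇨ a) = a := by
    intro a
    rw [Hoop.mul_himp_comm, hss a (p a), Hoop.himp_self, mul_one]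
  -- conjunct 9
  have h9 : ∀ a : A, memY' p s (s (p a) ⇨ a, p a) := by
    intro a
    refine ⟨?_, ?_⟩
    · show p (s (p a) ⇨ a) = 1
      rw [hpi, hps, Hoop.himp_self]
    · exact himp_mul_himp _ _
  -- conjunct 10
  have h10 : (s (p (1 : A)) ⇨ (1 : A), p (1 : A)) = ((1 : A), (1 : B)) := by
    rw [hp1, hs1, Hoop.himp_self]
  -- conjunct 13
  have h13 : ∀ q : A × B, memY' p s q →
      (s (p (s q.2 * q.1)) ⇨ (s q.2 * q.1), p (s q.2 * q.1)) = q := by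
    rintro ⟨x, b⟩ ⟨hx, hcl⟩
    have hb : p (s b * x) = b := by rw [hpm, hps, hx, mul_one]
    show (s (p (s b * x)) ⇨ (s b * x), p (s b * x)) = (x, b)
    rw [hb]
    exact congrArg (·, b) hcl
  -- conjunct 11, multiplicative part
  have h11a : ∀ a a' : A,
      (s (p (a * a')) ⇨ (a * a'), p (a * a')) =
        Ymul s (s (p a) ⇨ a, p a) (s (p a') ⇨ a', p a') := by
    intro a a'
    show (s (p (a * a')) ⇨ (a * a'), p (a * a')) =
      (s (p a * p a') ⇨ (s (p a * p a') * (s (p a) ⇨ a) * (s (p a') ⇨ a')), p a * p a')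
    have key : s (p a * p a') * (s (p a) ⇨ a) * (s (p a') ⇨ a') = a * a' := by
      rw [hsm, mul_assoc, mul_mul_mul_comm, h12, h12]
    rw [key, hpm]
  -- conjunct 11, implicative part
  have h11b : ∀ a a' : A,
      (s (p (a ⇨ a')) ⇨ (a ⇨ a'), p (a ⇨ a')) =
        Yimp s (s (p a) ⇨ a, p a) (s (p a') ⇨ a', p a') := by
    intro a a'
    show (s (p (a ⇨ a')) ⇨ (a ⇨ a'), p (a ⇨ a')) =
      (s (p a' ⇨ p a) ⇨ ((s (p a) ⇨ a) ⇨ (s (p a') ⇨ a')), p a ⇨ p a')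
    have key : s (p (a ⇨ a')) ⇨ (a ⇨ a') =
        s (p a' ⇨ p a) ⇨ ((s (p a) ⇨ a) ⇨ (s (p a') ⇨ a')) := by
      calc s (p (a ⇨ a')) ⇨ (a ⇨ a')
          = s (p a ⇨ p a') ⇨ ((s (p a) * (s (p a) ⇨ a)) ⇨ a') := by rw [hpi, h12]
        _ = (s (p a ⇨ p a') * s (p a)) ⇨ ((s (p a) ⇨ a) ⇨ a') := by
            rw [Hoop.mul_himp_assoc, Hoop.mul_himp_assoc]
        _ = s ((p a ⇨ p a') * p a) ⇨ ((s (p a) ⇨ a) ⇨ a') := by rw [hsm]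
        _ = s ((p a' ⇨ p a) * p a') ⇨ ((s (p a) ⇨ a) ⇨ a') := by
            rw [mul_comm _ (p a), mul_comm _ (p a'), Hoop.mul_himp_comm]
        _ = (s (p a' ⇨ p a) * s (p a')) ⇨ ((s (p a) ⇨ a) ⇨ a') := by rw [hsm]
        _ = s (p a' ⇨ p a) ⇨ (s (p a') ⇨ ((s (p a) ⇨ a) ⇨ a')) := by
            rw [Hoop.mul_himp_assoc]
        _ = s (p a' ⇨ p a) ⇨ ((s (p a') * (s (p a) ⇨ a)) ⇨ a') := by
            rw [Hoop.mul_himp_assoc]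
        _ = s (p a' ⇨ p a) ⇨ (((s (p a) ⇨ a) * s (p a')) ⇨ a') := by
            rw [mul_comm (s (p a')) _]
        _ = s (p a' ⇨ p a) ⇨ ((s (p a) ⇨ a) ⇨ (s (p a') ⇨ a')) := by
            rw [Hoop.mul_himp_assoc]
    rw [key, hpi]
  refine ⟨?_, ?_, ?_, ?_, ?_, ?_, ?_, ?_, h9, h10, fun a a' => ⟨h11a a a', h11b a a'⟩, h12, h13⟩
  · -- unit in Y'
    refine ⟨hp1, ?_⟩
    show s (1:B) ⇨ (s (1:B) * 1) = 1
    rw [hs1, mul_one, Hoop.himp_self]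
  · -- closure
    intro q r hq hr
    constructor
    · rw [← h13 q hq, ← h13 r hr, ← h11a]
      exact h9 _
    · rw [← h13 q hq, ← h13 r hr, ← h11b]
      exact h9 _
  · -- commutativity
    intro q r hq hr
    rw [← h13 q hq, ← h13 r hr, ← h11a, ← h11a, mul_comm]
  · -- associativity
    intro q r t hq hr ht
    rw [← h13 q hq, ← h13 r hr, ← h13 t ht, ← h11a, ← h11a, ← h11a, ← h11a, mul_assoc]
  · -- units
    intro q hq
    constructor
    · rw [← h10, ← h13 q hq, ← h11a, one_mul]
    · rw [← h10, ← h13 q hq, ← h11a, mul_one]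
  · -- himp_self on Y'
    intro q hq
    rw [← h13 q hq, ← h11b, Hoop.himp_self]
    exact h10
  · -- mul_himp_comm on Y'
    intro q r hq hr
    rw [← h13 q hq, ← h13 r hr, ← h11b, ← h11b, ← h11a, ← h11a, Hoop.mul_himp_comm]
  · -- mul_himp_assoc on Y'
    intro q r t hq hr ht
    rw [← h13 q hq, ← h13 r hr, ← h13 t ht, ← h11a, ← h11b, ← h11b, ← h11b,
      Hoop.mul_himp_assoc]
end

section
/- Let B, X be basic hoops and let (f, g) be a strong external action of B on X satisfying additionally condition (B2): for all b₁, b₂, b₃ ∈ B and x, y, z ∈ X, g_{b̃}( g_{b₃→(b₁→b₂)}( g_{b₂→b₁}(x → y) → z ) → ( g_{b₃→(b₂→b₁)}( g_{b₁→b₂}(y → x) → z ) → z ) ) = 1, where b̃ = ((((b₂ → b₁) → b₃) → b₃) → ((b₁ → b₂) → b₃)). Then the hoop Y' = {(x, b) ∈ X × B | f_b(x) = x}, with operations (x, b) → (y, b') = (g_{b'→b}(x → y), b → b') and (x, b) · (y, b') = (f_{b·b'}(x · y), b · b'), is a basic hoop, i.e. it satisfies ((u → v) → w) → (((v → u) →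 w) → w) = (1, 1) for all u, v, w ∈ Y'. -/
/-- A basic hoop: a hoop satisfying `((x → y) → z) → (((y → x) → z) → z) = 1`. -/
class BasicHoop (α : Type*) extends Hoop α where
  basic : ∀ x y z : α, ((x ⇨ y) ⇨ z) ⇨ (((y ⇨ x) ⇨ z) ⇨ z) = 1

/-- The multiplication of the semidirect product of a strong external action. -/
def Amul {B X : Type*} [Hoop B] [Hoop X] (f : B → X → X) (q r : X × B) : X × B :=
  (f (q.2 * r.2) (q.1 * r.1), q.2 * r.2)

/-- The implication of the semidirect product of a strong external action. -/
def Aimp {B X : Type*} [Hoop B] [Hoop X] (g : B → X → X) (q r : X × B) : X × B :=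
  (g (r.2 ⇨ q.2) (q.1 ⇨ r.1), q.2 ⇨ r.2)

/-- Membership in `Y' = {(x,b) ∈ X × B | f_b(x) = x}`. -/
def memY {B X : Type*} [Hoop B] [Hoop X] (f : B → X → X) (q : X × B) : Prop :=
  f q.2 q.1 = q.1


section HoopLemmas
variable {α : Type*} [Hoop α]

lemma hoop_one_himp (x : α) : (1 : α) ⇨ x = x := by
  have L2 : ∀ y : α, y * (y ⇨ 1) = 1 ⇨ y := by
    intro y
    have := Hoop.mul_himp_comm y (1 : α)
    simpa using this
  have L1 : ∀ y : α, (1 : α) ⇨ (y ⇨ 1) = y ⇨ 1 := by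
    intro y
    have := Hoop.mul_himp_assoc (1 : α) y (1 : α)
    simpa using this.symm
  set u := x ⇨ 1 with hu
  have huu : u * (u ⇨ 1) = u := by rw [L2 u, hu, L1 x]
  -- x ⇨ (1 ⇨ x) = 1
  have h1 : x ⇨ ((1 : α) ⇨ x) = 1 := by
    have := Hoop.mul_himp_assoc x (1 : α) x
    simpa [Hoop.himp_self] using this.symm
  -- x = (1⇨x) * ((1⇨x) ⇨ x)
  have h2 : ((1 : α) ⇨ x) * (((1 : α) ⇨ x) ⇨ x) = x := by
    have := Hoop.mul_himp_comm x ((1 : α) ⇨ x)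
    rw [h1] at this
    simpa using this.symm
  -- (1⇨x) ⇨ x = u ⇨ 1
  have h3 : ((1 : α) ⇨ x) ⇨ x = u ⇨ 1 := by
    rw [← L2 x, ← hu, mul_comm, Hoop.mul_himp_assoc, Hoop.himp_self]
  rw [h3, ← L2 x, ← hu, mul_assoc, huu] at h2
  rw [← L2 x, ← hu, h2]

lemma hoop_himp_one (x : α) : x ⇨ (1 : α) = 1 := by
  have L2 : ∀ y : α, y * (y ⇨ 1) = y := by
    intro y
    have := Hoop.mul_himp_comm y (1 : α)
    simpa [hoop_one_himp] using this
  have h := Hoop.mul_himp_assoc (x ⇨ 1) x (1 : α)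
  rw [mul_comm, L2, Hoop.himp_self] at h
  exact h

lemma hoop_himp_himp_self (x y : α) : x ⇨ (y ⇨ x) = 1 := by
  rw [← Hoop.mul_himp_assoc, mul_comm, Hoop.mul_himp_assoc, Hoop.himp_self,
    hoop_himp_one]

end HoopLemmas

/-- For a strong external action `(f,g)` of a basic hoop `B` on a basic hoop `X`
satisfying the additional condition (B2), the semidirect product hoop
`Y' = {(x,b) | f_b(x) = x}` is a basic hoop: it satisfies
`((u → v) → w) → (((v → u) → w) → w) = (1,1)` for all `u, v, w ∈ Y'`. -/
theorem stmt10 {B X : Type*} [BasicHoop B] [BasicHoop X] (f g : B → X → X)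
    (E1f : ∀ b : B, f b 1 = 1) (E1g : ∀ b : B, g b 1 = 1)
    (E2f : ∀ x : X, f 1 x = x) (E2g : ∀ x : X, g 1 x = x)
    (E3 : ∀ (b₁ b₂ : B) (x y : X),
      f (b₁ * b₂) (x * g b₁ (x ⇨ y)) = f (b₁ * b₂) (x * (x ⇨ y)))
    (E4 : ∀ (b₁ b₂ b₃ : B) (x y z : X),
      g (b₃ ⇨ (b₁ * b₂)) (f (b₁ * b₂) (x * y) ⇨ z)
        = g ((b₂ ⇨ b₃) ⇨ b₁) (x ⇨ g (b₃ ⇨ b₂) (y ⇨ z)))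
    (B2 : ∀ (b₁ b₂ b₃ : B) (x y z : X),
      g ((((b₂ ⇨ b₁) ⇨ b₃) ⇨ b₃) ⇨ ((b₁ ⇨ b₂) ⇨ b₃))
          (g (b₃ ⇨ (b₁ ⇨ b₂)) (g (b₂ ⇨ b₁) (x ⇨ y) ⇨ z) ⇨
            (g (b₃ ⇨ (b₂ ⇨ b₁)) (g (b₁ ⇨ b₂) (y ⇨ x) ⇨ z) ⇨ z)) = 1) :
    ∀ u v w : X × B, memY f u → memY f v → memY f w →
      Aimp g (Aimp g (Aimp g u v) w)
          (Aimp g (Aimp g (Aimp g v u) w) w) = ((1 : X), (1 : B)) := by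
  intro u v w _ _ _
  obtain ⟨x, b₁⟩ := u
  obtain ⟨y, b₂⟩ := v
  obtain ⟨z, b₃⟩ := w
  simp only [Aimp, Prod.mk.injEq]
  constructor
  · rw [hoop_himp_himp_self b₃ (b₂ ⇨ b₁), E2g]
    exact B2 b₁ b₂ b₃ x y z
  · exact BasicHoop.basic b₁ b₂ b₃
end
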